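/- For a > 0, μ ≥ a, and α > 0 with α ≠ 1 such that α(μ/a - 1) + 1 > 0 and α(2 + 1/a) - 1 > 0, the Rényi information of order α of the density f(x) = (1+x)^{-(μ+1)/a - 1} x^{μ/a - 1} / B(μ/a, 1+1/a) on (0,∞) equals (1/(1-α)) [ -α log B(μ/a, 1+1/a) + log B(α(μ/a - 1)+1, α(2+1/a)-1) ]. -/

import Mathlib

open Real MeasureTheory

/-- The Beta function. -/
noncomputable def betaFn (p q : ℝ) : ℝ := Real.Gamma p * Real.Gamma q / Real.Gamma (p + q)
lemma betaFn_pos {p q : ℝ} (hp : 0 < p) (hq : 0 < q) : 0 < betaFn p q :=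
  div_pos (mul_pos (Real.Gamma_pos_of_pos hp) (Real.Gamma_pos_of_pos hq))
    (Real.Gamma_pos_of_pos (by linarith))

lemma betaIntegral_real {p q : ℝ} (hp : 0 < p) (hq : 0 < q) :
    ∫ x in Set.Ioo (0:ℝ) 1, x ^ (p-1) * (1-x) ^ (q-1) = betaFn p q := by
  have key : Complex.betaIntegral p q
      = ((∫ x in (0:ℝ)..1, x ^ (p-1) * (1-x) ^ (q-1)) : ℝ) := by
    rw [Complex.betaIntegral, ← intervalIntegral.integral_ofReal]
    apply intervalIntegral.integral_congr
    intro x hx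
    rw [Set.uIcc_of_le zero_le_one] at hx
    have h1 : (0:ℝ) ≤ x := hx.1
    have h2 : (0:ℝ) ≤ 1 - x := by linarith [hx.2]
    push_cast [Complex.ofReal_cpow h1, Complex.ofReal_cpow h2]
    ring
  have h := Complex.Gamma_mul_Gamma_eq_betaIntegral
    (s := (p:ℂ)) (t := (q:ℂ)) (by simpa using hp) (by simpa using hq)
  rw [key] at h
  have hG : Real.Gamma (p + q) ≠ 0 := (Real.Gamma_pos_of_pos (by linarith)).ne'
  have : ((Real.Gamma p * Real.Gamma q : ℝ) : ℂ)
      = ((Real.Gamma (p+q) * ∫ x in (0:ℝ)..1, x ^ (p-1) * (1-x) ^ (q-1) : ℝ) : ℂ) := by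
    push_cast [Complex.Gamma_ofReal] at h ⊢
    rw [← Complex.ofReal_add] at h
    rw [Complex.Gamma_ofReal] at h
    exact h
  have h' := Complex.ofReal_injective this
  rw [intervalIntegral.integral_of_le zero_le_one,
    MeasureTheory.integral_Ioc_eq_integral_Ioo] at h'
  rw [betaFn, eq_div_iff hG]
  rw [h']; ring

lemma beta_Ioi {p q : ℝ} (hp : 0 < p) (hq : 0 < q) :
    ∫ x in Set.Ioi (0:ℝ), x ^ (p-1) * (1+x) ^ (-(p+q)) = betaFn p q := by
  have himg : (fun t : ℝ => t / (1 - t)) '' Set.Ioo 0 1 = Set.Ioi 0 := by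
    ext y
    constructor
    · rintro ⟨t, ⟨ht0, ht1⟩, rfl⟩
      exact div_pos ht0 (by linarith)
    · intro hy
      refine ⟨y / (1 + y), ⟨div_pos hy (by linarith [Set.mem_Ioi.mp hy]), ?_⟩, ?_⟩
      · rw [div_lt_one (by linarith [Set.mem_Ioi.mp hy])]; linarith
      · have h1y : (1:ℝ) + y ≠ 0 := by have := Set.mem_Ioi.mp hy; linarith
        field_simp; ring
  have hderiv : ∀ t ∈ Set.Ioo (0:ℝ) 1,
      HasDerivWithinAt (fun t : ℝ => t / (1 - t)) (((1 - t) * (1 - t))⁻¹) (Set.Ioo 0 1) t := by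
    intro t ht
    have hne : (1:ℝ) - t ≠ 0 := by have := ht.2; intro h; linarith [sub_eq_zero.mp h]
    have : HasDerivAt (fun t : ℝ => t / (1 - t))
        ((1 * (1 - t) - t * (0 - 1)) / ((1 - t) ^ 2)) t :=
      (hasDerivAt_id t).div ((hasDerivAt_const t (1:ℝ)).sub (hasDerivAt_id t)) hne
    refine this.hasDerivWithinAt.congr_deriv ?_
    field_simp; ring
  have hinj : Set.InjOn (fun t : ℝ => t / (1 - t)) (Set.Ioo 0 1) := by
    intro s hs t ht h
    have hs1 : (1:ℝ) - s ≠ 0 := by have := hs.2; intro hh; linarith [sub_eq_zero.mp hh]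
    have ht1 : (1:ℝ) - t ≠ 0 := by have := ht.2; intro hh; linarith [sub_eq_zero.mp hh]
    field_simp at h
    nlinarith [h]
  rw [← himg, MeasureTheory.integral_image_eq_integral_abs_deriv_smul measurableSet_Ioo hderiv hinj]
  rw [← betaIntegral_real hp hq]
  apply MeasureTheory.setIntegral_congr_fun measurableSet_Ioo
  intro t ht
  have ht0 : (0:ℝ) < t := ht.1
  have ht1 : (0:ℝ) < 1 - t := by linarith [ht.2]
  have h1 : (1:ℝ) + t / (1 - t) = (1 - t)⁻¹ := by field_simp; ring
  simp only [smul_eq_mul, h1]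
  rw [abs_of_pos (by positivity)]
  have e0 : ((1-t)*(1-t))⁻¹ = (1-t) ^ (-2:ℝ) := by
    rw [Real.rpow_neg ht1.le, show ((2:ℝ)) = ((2:ℕ):ℝ) by norm_num, Real.rpow_natCast]
    rw [sq]
  have e1 : (t/(1-t)) ^ (p-1) = t ^ (p-1) * (1-t) ^ (-(p-1)) := by
    rw [Real.div_rpow ht0.le ht1.le, Real.rpow_neg ht1.le, div_eq_mul_inv]
  have e2 : ((1-t)⁻¹) ^ (-(p+q)) = (1-t) ^ (p+q) := by
    rw [Real.inv_rpow ht1.le, Real.rpow_neg ht1.le, inv_inv]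
  rw [e0, e1, e2, mul_comm, mul_assoc, mul_assoc, ← Real.rpow_add ht1, ← Real.rpow_add ht1]
  congr 1
  ring

theorem renyi_scaled_F (a μ α : ℝ) (ha : 0 < a) (hμ : a ≤ μ)
    (hα : 0 < α) (hα1 : α ≠ 1)
    (h1 : 0 < α * (μ/a - 1) + 1) (h2 : 0 < α * (2 + 1/a) - 1) :
    (1 / (1 - α)) * Real.log (∫ x in Set.Ioi (0:ℝ),
      ((1 + x) ^ (-(μ+1)/a - 1) * x ^ (μ/a - 1) / betaFn (μ/a) (1 + 1/a)) ^ α) =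
    (1 / (1 - α)) * (-α * Real.log (betaFn (μ/a) (1 + 1/a))
      + Real.log (betaFn (α * (μ/a - 1) + 1) (α * (2 + 1/a) - 1))) := by
  set p := α * (μ/a - 1) + 1 with hp
  set q := α * (2 + 1/a) - 1 with hq
  have hb : 0 < μ / a := div_pos (by linarith) ha
  have hc : 0 < 1 + 1/a := by positivity
  have hC : 0 < betaFn (μ/a) (1 + 1/a) := betaFn_pos hb hc
  have hkey : (∫ x in Set.Ioi (0:ℝ),
      ((1 + x) ^ (-(μ+1)/a - 1) * x ^ (μ/a - 1) / betaFn (μ/a) (1 + 1/a)) ^ α)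
      = betaFn p q * (betaFn (μ/a) (1 + 1/a)) ^ (-α) := by
    rw [← beta_Ioi h1 h2, ← MeasureTheory.integral_mul_const]
    apply MeasureTheory.setIntegral_congr_fun measurableSet_Ioi
    intro x hx
    have hx0 : (0:ℝ) < x := hx
    have hx1 : (0:ℝ) < 1 + x := by linarith
    have e1 : ((1 + x) ^ (-(μ+1)/a - 1) * x ^ (μ/a - 1) / betaFn (μ/a) (1 + 1/a)) ^ α
        = ((1 + x) ^ (-(μ+1)/a - 1)) ^ α * (x ^ (μ/a - 1)) ^ α
          * (betaFn (μ/a) (1 + 1/a)) ^ (-α) := by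
      rw [div_eq_mul_inv, Real.mul_rpow (by positivity) (by positivity),
        Real.mul_rpow (by positivity) (by positivity),
        Real.inv_rpow hC.le, ← Real.rpow_neg hC.le]
    simp only []
    rw [e1, ← Real.rpow_mul hx1.le, ← Real.rpow_mul hx0.le]
    have ea : (-(μ+1)/a - 1) * α = -(p+q) := by
      rw [hp, hq]; field_simp; ring
    have eb : (μ/a - 1) * α = p - 1 := by rw [hp]; ring
    rw [ea, eb]; ring
  rw [hkey, Real.log_mul (betaFn_pos h1 h2).ne' (by positivity),
    Real.log_rpow hC]
  ring
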